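/- arXiv:2111.13748 — 2 statements merged into one kernel-verified Lean document; each statement's English description precedes it below -/
import Mathlib

section
/- Let H_r be the core gadget at scale r for a parameter ε ∈ (0,1) with 1/ε an odd integer and k = (1/ε+1)/2. Then: (1) every short edge of H_r has weight 2r·sin(ε^{3/2}/2), every long edge has weight 2r·sin(k·ε^{3/2}/2), and the terminal edge has weight 2r·sin(√ε/2); (2) the minimum spanning tree of H_r has total weight at most r·√ε; and (3) for all sufficiently small ε, the total edge weight of H_r is at least r/(6√ε). -/
open scoped ENNReal

namespace LightSpanners

/-- The total weight of a walk: the sum of the weights of its edges. -/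
def walkWeight {V : Type*} {G : SimpleGraph V} (w : Sym2 V → ℝ) {u v : V} (p : G.Walk u v) : ℝ :=
  (p.edges.map w).sum

/-- Weighted shortest-path distance (`∞` if there is no path). -/
noncomputable def wdist {V : Type*} (G : SimpleGraph V) (w : Sym2 V → ℝ) (u v : V) : ℝ≥0∞ :=
  ⨅ p : G.Walk u v, ENNReal.ofReal (walkWeight w p)

/-- Total edge weight of a graph. -/
noncomputable def gweight {V : Type*} (G : SimpleGraph V) (w : Sym2 V → ℝ) : ℝ :=
  ∑ᶠ e ∈ G.edgeSet, w e

/-- All edges have positive weight. -/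
def PosWeights {V : Type*} (G : SimpleGraph V) (w : Sym2 V → ℝ) : Prop :=
  ∀ e ∈ G.edgeSet, 0 < w e

/-- Weight of a minimum spanning tree of `G`: the infimum of the total weights of
spanning trees of `G`. -/
noncomputable def mstWeight {V : Type*} (G : SimpleGraph V) (w : Sym2 V → ℝ) : ℝ :=
  sInf {x : ℝ | ∃ T : SimpleGraph V, T ≤ G ∧ T.IsTree ∧ gweight T w = x}

/-- `H` is a `t`-spanner of `G` (with edge weights `w`). -/
def IsSpanner {V : Type*} (G H : SimpleGraph V) (w : Sym2 V → ℝ) (t : ℝ) : Prop :=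
  H ≤ G ∧ ∀ u v : V, wdist H w u v ≤ ENNReal.ofReal t * wdist G w u v

/-- `G` contains the complete graph on `r` vertices as a minor
(branch-set characterization). -/
def HasCompleteMinor {V : Type*} (G : SimpleGraph V) (r : ℕ) : Prop :=
  ∃ B : Fin r → Set V,
    (∀ i, (B i).Nonempty) ∧
    (∀ i, (G.induce (B i)).Connected) ∧
    (∀ i j, i ≠ j → Disjoint (B i) (B j)) ∧
    (∀ i j, i ≠ j → ∃ u ∈ B i, ∃ v ∈ B j, G.Adj u v)

/-- Euclidean/metric weights on the pairs of a set of points. -/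
noncomputable def distW {E : Type*} [PseudoMetricSpace E] (s : Set E) : Sym2 s → ℝ :=
  Sym2.lift ⟨fun a b => dist (a : E) (b : E), fun a b => dist_comm _ _⟩

/-- The breakpoints of the core gadget at scale `r`:  the `a`-th breakpoint is the point
of the circle of radius `r` centered at the origin with angle `a·ε^{3/2}` (so consecutive
breakpoints subtend an angle `ε^{3/2}`). -/
noncomputable def gadgetPt (r ε : ℝ) (a : ℕ) : ℂ :=
  (r : ℂ) * Complex.exp ((((a : ℝ) * ε ^ ((3 : ℝ) / 2) : ℝ) : ℂ) * Complex.I)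

/-- The (abstract) core gadget graph on the `2k` breakpoints `0, 1, …, 2k−1`:
the short edges `(i, i+1)` for `0 ≤ i ≤ 2k−2`, the long edges `(i, i+k)` for
`0 ≤ i ≤ k−1`, and the terminal edge `(0, 2k−1)`. -/
def coreGadget (k : ℕ) : SimpleGraph (Fin (2 * k)) :=
  SimpleGraph.fromRel (fun i j =>
    (j : ℕ) = (i : ℕ) + 1 ∨ (j : ℕ) = (i : ℕ) + k ∨
      ((i : ℕ) = 0 ∧ (j : ℕ) = 2 * k - 1))

/-- The edge weights of the core gadget at scale `r`: Euclidean distances between the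
corresponding breakpoints. -/
noncomputable def gadgetW (r ε : ℝ) {k : ℕ} : Sym2 (Fin (2 * k)) → ℝ :=
  Sym2.lift ⟨fun i j => dist (gadgetPt r ε (i : ℕ)) (gadgetPt r ε (j : ℕ)),
    fun i j => dist_comm _ _⟩

/-! ### Auxiliary lemmas -/

lemma abs_exp_mul_I_sub (x y : ℝ) :
    ‖Complex.exp ((x:ℂ) * Complex.I) - Complex.exp ((y:ℂ) * Complex.I)‖
      = 2 * |Real.sin ((x - y) / 2)| := by
  have h1 : Complex.exp ((x:ℂ) * Complex.I) - Complex.exp ((y:ℂ) * Complex.I)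
      = Complex.exp ((((x+y)/2 : ℝ) : ℂ) * Complex.I) *
        (Complex.exp ((((x-y)/2 : ℝ) : ℂ) * Complex.I)
          - Complex.exp ((-(((x-y)/2 : ℝ) : ℂ)) * Complex.I)) := by
    rw [mul_sub, ← Complex.exp_add, ← Complex.exp_add]
    push_cast
    ring_nf
  have h2 : Complex.exp ((((x-y)/2 : ℝ) : ℂ) * Complex.I)
      - Complex.exp ((-(((x-y)/2 : ℝ) : ℂ)) * Complex.I)
      = 2 * Complex.sin ((((x-y)/2 : ℝ)) : ℂ) * Complex.I := by
    rw [Complex.exp_mul_I, Complex.exp_mul_I, Complex.cos_neg, Complex.sin_neg]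
    ring
  rw [h1, h2, norm_mul, Complex.norm_exp_ofReal_mul_I, one_mul, norm_mul, norm_mul,
    Complex.norm_I, mul_one, ← Complex.ofReal_sin, Complex.norm_real]
  norm_num

lemma dist_gadgetPt (r ε : ℝ) (hr : 0 ≤ r) (a b : ℕ) :
    dist (gadgetPt r ε a) (gadgetPt r ε b)
      = 2 * r * |Real.sin ((((a:ℝ) - (b:ℝ)) * ε ^ ((3:ℝ)/2)) / 2)| := by
  unfold gadgetPt
  rw [Complex.dist_eq,
    show (r:ℂ) * Complex.exp ((((a : ℝ) * ε ^ ((3 : ℝ) / 2) : ℝ) : ℂ) * Complex.I)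
      - (r:ℂ) * Complex.exp ((((b : ℝ) * ε ^ ((3 : ℝ) / 2) : ℝ) : ℂ) * Complex.I)
      = (r:ℂ) * (Complex.exp ((((a : ℝ) * ε ^ ((3 : ℝ) / 2) : ℝ) : ℂ) * Complex.I)
        - Complex.exp ((((b : ℝ) * ε ^ ((3 : ℝ) / 2) : ℝ) : ℂ) * Complex.I)) from by ring,
    norm_mul, Complex.norm_real, Real.norm_eq_abs, abs_of_nonneg hr, abs_exp_mul_I_sub,
    show (a:ℝ) * ε ^ ((3:ℝ)/2) - (b:ℝ) * ε ^ ((3:ℝ)/2) = ((a:ℝ) - (b:ℝ)) * ε ^ ((3:ℝ)/2) from by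
      ring]
  ring

lemma gadgetW_formula (r ε : ℝ) (hr : 0 ≤ r) {k : ℕ} (i j : Fin (2*k)) (d : ℕ)
    (hd : (j:ℕ) = (i:ℕ) + d) (h1 : 0 ≤ (d:ℝ) * ε ^ ((3:ℝ)/2))
    (h2 : (d:ℝ) * ε ^ ((3:ℝ)/2) ≤ Real.pi) :
    gadgetW r ε s(i,j) = 2 * r * Real.sin ((d:ℝ) * ε ^ ((3:ℝ)/2) / 2) := by
  have hij : ((i:ℕ):ℝ) - ((j:ℕ):ℝ) = -(d:ℝ) := by rw [hd]; push_cast; ring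
  simp only [gadgetW, Sym2.lift_mk]
  rw [dist_gadgetPt r ε hr, hij, neg_mul, neg_div, Real.sin_neg, abs_neg,
    abs_of_nonneg (Real.sin_nonneg_of_nonneg_of_le_pi (by linarith) (by
      nlinarith [Real.pi_pos]))]

open SimpleGraph

lemma pathGraph_crossing {n : ℕ} (i : ℕ) {u v : Fin n} (p : (pathGraph n).Walk u v) :
    (u : ℕ) ≤ i → i < (v : ℕ) →
    ∃ x y : Fin n, (x : ℕ) = i ∧ (y : ℕ) = i + 1 ∧ s(x, y) ∈ p.edges := by
  induction p with
  | nil => intro h1 h2; omega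
  | @cons a b c h p ih =>
    intro hu hv
    by_cases hb : (b : ℕ) ≤ i
    · obtain ⟨x, y, hx, hy, hm⟩ := ih hb hv
      exact ⟨x, y, hx, hy, by simp [Walk.edges_cons, hm]⟩
    · push_neg at hb
      have h' := pathGraph_adj.mp h
      refine ⟨a, b, by omega, by omega, by simp [Walk.edges_cons]⟩

lemma pathGraph_isAcyclic (n : ℕ) : (pathGraph n).IsAcyclic := by
  rw [isAcyclic_iff_forall_adj_isBridge]
  intro v w h
  rw [isBridge_iff_adj_and_forall_walk_mem_edges]
  refine fun p => ?_
  rcases pathGraph_adj.mp h with h' | h'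
  · obtain ⟨x, y, hx, hy, hm⟩ := pathGraph_crossing (v : ℕ) p le_rfl (by omega)
    have hxv : x = v := Fin.ext hx
    have hyw : y = w := Fin.ext (by omega)
    subst hxv; subst hyw; exact hm
  · obtain ⟨x, y, hx, hy, hm⟩ := pathGraph_crossing (w : ℕ) p.reverse le_rfl (by omega)
    have hxw : x = w := Fin.ext hx
    have hyv : y = v := Fin.ext (by omega)
    rw [Walk.edges_reverse, List.mem_reverse] at hm
    subst hxw; subst hyv; rwa [Sym2.eq_swap] at hm

lemma pathGraph_isTree {n : ℕ} (hn : 0 < n) : (pathGraph n).IsTree := by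
  obtain ⟨m, rfl⟩ := Nat.exists_eq_succ_of_ne_zero hn.ne'
  exact ⟨pathGraph_connected m, pathGraph_isAcyclic _⟩

def pathEdge (n : ℕ) (i : Fin (n - 1)) : Sym2 (Fin n) :=
  s((⟨(i : ℕ), by have := i.isLt; omega⟩ : Fin n), ⟨(i : ℕ) + 1, by have := i.isLt; omega⟩)

lemma pathEdge_injective (n : ℕ) : Function.Injective (pathEdge n) := by
  intro i j h
  unfold pathEdge at h
  rw [Sym2.eq_iff] at h
  apply Fin.ext
  rcases h with ⟨h1, h2⟩ | ⟨h1, h2⟩ <;>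
    simp only [Fin.mk.injEq] at h1 h2 <;> omega

lemma pathGraph_edgeSet (n : ℕ) :
    (pathGraph n).edgeSet = Set.range (pathEdge n) := by
  ext e
  induction e using Sym2.ind with
  | _ u v =>
    simp only [mem_edgeSet, pathGraph_adj, Set.mem_range]
    constructor
    · rintro (h | h)
      · refine ⟨⟨(u : ℕ), by have := v.isLt; omega⟩, ?_⟩
        unfold pathEdge
        rw [Sym2.eq_iff]
        exact Or.inl ⟨Fin.ext rfl, Fin.ext (by simpa using h)⟩
      · refine ⟨⟨(v : ℕ), by have := u.isLt; omega⟩, ?_⟩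
        unfold pathEdge
        rw [Sym2.eq_iff]
        exact Or.inr ⟨Fin.ext rfl, Fin.ext (by simpa using h)⟩
    · rintro ⟨i, hi⟩
      unfold pathEdge at hi
      rw [Sym2.eq_iff] at hi
      rcases hi with ⟨h1, h2⟩ | ⟨h1, h2⟩ <;>
        [left; right] <;> rw [← h1, ← h2]

lemma gweight_pathGraph (n : ℕ) (w : Sym2 (Fin n) → ℝ) :
    gweight (pathGraph n) w = ∑ i : Fin (n - 1), w (pathEdge n i) := by
  rw [gweight, pathGraph_edgeSet, finsum_mem_range (pathEdge_injective n),
    finsum_eq_sum_of_fintype]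

lemma pathGraph_le_coreGadget (k : ℕ) : pathGraph (2 * k) ≤ coreGadget k := by
  intro u v h
  rw [pathGraph_adj] at h
  rw [coreGadget, fromRel_adj]
  constructor
  · intro huv; rw [huv] at h; omega
  · omega

lemma gweight_nonneg' {V : Type*} (G : SimpleGraph V) (w : Sym2 V → ℝ)
    (hw : ∀ e, 0 ≤ w e) : 0 ≤ gweight G w := by
  rw [gweight, finsum_mem_def]
  exact finsum_nonneg fun e => Set.indicator_nonneg (fun x _ => hw x) e

def longEdge (k : ℕ) (i : Fin k) : Sym2 (Fin (2 * k)) :=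
  s((⟨(i : ℕ), by have := i.isLt; omega⟩ : Fin (2 * k)),
    ⟨(i : ℕ) + k, by have := i.isLt; omega⟩)

lemma gweight_core_ge (k : ℕ) (w : Sym2 (Fin (2 * k)) → ℝ)
    (hw : ∀ e, 0 ≤ w e) :
    ∑ i : Fin k, w (longEdge k i) ≤ gweight (coreGadget k) w := by
  classical
  have hfin : (coreGadget k).edgeSet.Finite := Set.toFinite _
  rw [gweight, ← hfin.coe_toFinset, finsum_mem_coe_finset]
  have hinj : ∀ x ∈ Finset.univ, ∀ y ∈ Finset.univ,
      longEdge k x = longEdge k y → x = y := by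
    intro x _ y _ h
    unfold longEdge at h
    rw [Sym2.eq_iff] at h
    apply Fin.ext
    rcases h with ⟨h1, h2⟩ | ⟨h1, h2⟩ <;>
      simp only [Fin.mk.injEq] at h1 h2 <;> omega
  calc ∑ i : Fin k, w (longEdge k i)
      = ∑ e ∈ Finset.image (longEdge k) Finset.univ, w e :=
        (Finset.sum_image hinj).symm
    _ ≤ ∑ e ∈ hfin.toFinset, w e := by
        apply Finset.sum_le_sum_of_subset_of_nonneg
        · intro e he
          simp only [Finset.mem_image] at he
          obtain ⟨i, _, rfl⟩ := he
          rw [Set.Finite.mem_toFinset]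
          show (coreGadget k).Adj _ _
          rw [coreGadget, fromRel_adj]
          constructor
          · intro hcon
            have := congrArg Fin.val hcon
            simp only at this
            omega
          · left; right; left; rfl
        · intro e _ _; exact hw e

/-! ### Main theorem -/

set_option maxHeartbeats 2000000 in
/-- Basic properties of the core gadget `H_r` (here `1/ε = 2k−1` is an
odd integer, i.e. `k = (1/ε+1)/2`):
(1) every short edge has weight `2r·sin(ε^{3/2}/2)`, every long edge has weight
`2r·sin(k·ε^{3/2}/2)`, and the terminal edge has weight `2r·sin(√ε/2)`;
(2) the minimum spanning tree of `H_r` has total weight at most `r·√ε`;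
(3) for all sufficiently small `ε`, the total edge weight of `H_r` is at least
`r/(6√ε)`. -/
theorem core_gadget_properties :
    ∃ ε₀ : ℝ, 0 < ε₀ ∧
      ∀ (ε : ℝ) (k : ℕ), 2 ≤ k → ε = 1 / (2 * (k : ℝ) - 1) →
      ∀ r : ℝ, 0 < r →
        (∀ i j : Fin (2 * k), (j : ℕ) = (i : ℕ) + 1 →
          gadgetW r ε s(i, j) = 2 * r * Real.sin (ε ^ ((3 : ℝ) / 2) / 2)) ∧
        (∀ i j : Fin (2 * k), (j : ℕ) = (i : ℕ) + k →
          gadgetW r ε s(i, j) = 2 * r * Real.sin ((k : ℝ) * ε ^ ((3 : ℝ) / 2) / 2)) ∧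
        (∀ i j : Fin (2 * k), (i : ℕ) = 0 → (j : ℕ) = 2 * k - 1 →
          gadgetW r ε s(i, j) = 2 * r * Real.sin (Real.sqrt ε / 2)) ∧
        mstWeight (coreGadget k) (gadgetW r ε) ≤ r * Real.sqrt ε ∧
        (ε ≤ ε₀ → r / (6 * Real.sqrt ε) ≤ gweight (coreGadget k) (gadgetW r ε)) := by
  refine ⟨1, one_pos, ?_⟩
  intro ε k hk hε r hr
  have hK : (2:ℝ) ≤ (k:ℝ) := by exact_mod_cast hk
  have hεpos : 0 < ε := by rw [hε]; apply div_pos one_pos; linarith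
  have hkey : (2*(k:ℝ) - 1) * ε = 1 := by
    rw [hε]; field_simp
    exact div_self (ne_of_gt (by linarith))
  have hε1 : ε ≤ 1 := by nlinarith
  have hspos : 0 < Real.sqrt ε := Real.sqrt_pos.mpr hεpos
  have hss : Real.sqrt ε * Real.sqrt ε = ε := Real.mul_self_sqrt hεpos.le
  have hs1 : Real.sqrt ε ≤ 1 := by nlinarith
  have ht : ε ^ ((3:ℝ)/2) = ε * Real.sqrt ε := by
    rw [show (3:ℝ)/2 = 1 + 1/2 by norm_num, Real.rpow_add hεpos, Real.rpow_one,
      Real.sqrt_eq_rpow]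
  have hπ : (3:ℝ) < Real.pi := Real.pi_gt_three
  have htnn : 0 ≤ ε ^ ((3:ℝ)/2) := by rw [ht]; positivity
  have ht1 : ε ^ ((3:ℝ)/2) ≤ 1 := by rw [ht]; nlinarith
  have hKε : (k:ℝ) * ε ≤ 1 := by nlinarith
  have hw_nonneg : ∀ e : Sym2 (Fin (2*k)), 0 ≤ gadgetW r ε e := by
    intro e
    induction e using Sym2.ind with
    | _ a b => simp only [gadgetW, Sym2.lift_mk]; exact dist_nonneg
  -- Claim 1: short edges
  have hshort : ∀ i j : Fin (2 * k), (j : ℕ) = (i : ℕ) + 1 →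
      gadgetW r ε s(i, j) = 2 * r * Real.sin (ε ^ ((3 : ℝ) / 2) / 2) := by
    intro i j hij
    have := gadgetW_formula r ε hr.le i j 1 hij
      (by rw [Nat.cast_one, one_mul]; exact htnn)
      (by rw [Nat.cast_one, one_mul]; linarith)
    simpa using this
  -- Claim 2: long edges
  have hKt : (k:ℝ) * ε ^ ((3:ℝ)/2) ≤ 1 := by
    rw [ht]
    nlinarith [mul_nonneg (sub_nonneg.mpr hKε) hspos.le]
  have hlong : ∀ i j : Fin (2 * k), (j : ℕ) = (i : ℕ) + k →
      gadgetW r ε s(i, j) = 2 * r * Real.sin ((k : ℝ) * ε ^ ((3 : ℝ) / 2) / 2) := by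
    intro i j hij
    exact gadgetW_formula r ε hr.le i j k hij
      (mul_nonneg (by positivity) htnn) (by linarith)
  -- Claim 3: terminal edge
  have hc : ((2*k-1 : ℕ):ℝ) = 2*(k:ℝ) - 1 := by
    rw [Nat.cast_sub (by omega : 1 ≤ 2*k)]; push_cast; ring
  have heq : ((2*k-1 : ℕ):ℝ) * ε ^ ((3:ℝ)/2) = Real.sqrt ε := by
    rw [hc, ht]
    linear_combination Real.sqrt ε * hkey
  have hterm : ∀ i j : Fin (2 * k), (i : ℕ) = 0 → (j : ℕ) = 2 * k - 1 →
      gadgetW r ε s(i, j) = 2 * r * Real.sin (Real.sqrt ε / 2) := by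
    intro i j hi hj
    have := gadgetW_formula r ε hr.le i j (2*k-1) (by omega)
      (by rw [heq]; exact hspos.le) (by rw [heq]; linarith)
    rw [this, heq]
  refine ⟨hshort, hlong, hterm, ?_, ?_⟩
  -- Part 2: MST weight
  · have htree : (pathGraph (2*k)).IsTree := pathGraph_isTree (by omega)
    have hbdd : BddBelow {x : ℝ | ∃ T : SimpleGraph (Fin (2*k)),
        T ≤ coreGadget k ∧ T.IsTree ∧ gweight T (gadgetW r ε) = x} := by
      refine ⟨0, ?_⟩
      rintro x ⟨T, _, _, rfl⟩
      exact gweight_nonneg' T _ hw_nonneg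
    have hmem : gweight (pathGraph (2*k)) (gadgetW r ε) ∈ {x : ℝ | ∃ T : SimpleGraph (Fin (2*k)),
        T ≤ coreGadget k ∧ T.IsTree ∧ gweight T (gadgetW r ε) = x} :=
      ⟨pathGraph (2*k), pathGraph_le_coreGadget k, htree, rfl⟩
    have hmst : mstWeight (coreGadget k) (gadgetW r ε)
        ≤ gweight (pathGraph (2*k)) (gadgetW r ε) := csInf_le hbdd hmem
    have hgp : gweight (pathGraph (2*k)) (gadgetW r ε)
        = ((2*k-1 : ℕ):ℝ) * (2 * r * Real.sin (ε ^ ((3:ℝ)/2) / 2)) := by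
      rw [gweight_pathGraph]
      rw [show (∑ i : Fin (2*k-1), gadgetW r ε (pathEdge (2*k) i))
          = ∑ _i : Fin (2*k-1), 2 * r * Real.sin (ε ^ ((3:ℝ)/2) / 2) from
        Finset.sum_congr rfl (fun i _ => by unfold pathEdge; exact hshort _ _ rfl)]
      rw [Finset.sum_const, Finset.card_univ, Fintype.card_fin, nsmul_eq_mul]
    have hsin_le : Real.sin (ε ^ ((3:ℝ)/2) / 2) ≤ ε ^ ((3:ℝ)/2) / 2 :=
      Real.sin_le (by linarith)
    have hsin_nn : 0 ≤ Real.sin (ε ^ ((3:ℝ)/2) / 2) :=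
      Real.sin_nonneg_of_nonneg_of_le_pi (by linarith) (by linarith)
    have hfin : ((2*k-1 : ℕ):ℝ) * (2 * r * Real.sin (ε ^ ((3:ℝ)/2) / 2)) ≤ r * Real.sqrt ε := by
      rw [hc]
      calc (2*(k:ℝ) - 1) * (2 * r * Real.sin (ε ^ ((3:ℝ)/2) / 2))
          ≤ (2*(k:ℝ) - 1) * (2 * r * (ε ^ ((3:ℝ)/2) / 2)) := by
            apply mul_le_mul_of_nonneg_left
              (mul_le_mul_of_nonneg_left hsin_le (by linarith)) (by linarith)
        _ = r * Real.sqrt ε := by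
            rw [ht]; linear_combination (r * Real.sqrt ε) * hkey
    rw [hgp] at hmst
    linarith [hmst, hfin]
  -- Part 3: total weight lower bound
  · intro _
    have hsum : (∑ i : Fin k, gadgetW r ε (longEdge k i))
        = (k:ℝ) * (2 * r * Real.sin ((k:ℝ) * ε ^ ((3:ℝ)/2) / 2)) := by
      rw [show (∑ i : Fin k, gadgetW r ε (longEdge k i))
          = ∑ _i : Fin k, 2 * r * Real.sin ((k:ℝ) * ε ^ ((3:ℝ)/2) / 2) from
        Finset.sum_congr rfl (fun i _ => by unfold longEdge; exact hlong _ _ rfl)]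
      rw [Finset.sum_const, Finset.card_univ, Fintype.card_fin, nsmul_eq_mul]
    have hge := gweight_core_ge k (gadgetW r ε) hw_nonneg
    rw [hsum] at hge
    set x : ℝ := (k:ℝ) * ε ^ ((3:ℝ)/2) / 2 with hxdef
    have hx_eq : x = (k:ℝ) * ε * Real.sqrt ε / 2 := by rw [hxdef, ht]; ring
    have hxpos : 0 < x := by
      rw [hx_eq]
      apply div_pos (mul_pos (mul_pos (by linarith) hεpos) hspos)
      norm_num
    have hxhalf : x ≤ 1/2 := by
      rw [hx_eq]
      nlinarith [mul_nonneg (sub_nonneg.mpr hKε) hspos.le]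
    have hsin := Real.sin_gt_sub_cube hxpos
    have hx2 : x^2 ≤ 1/4 := by
      have h := mul_le_mul hxhalf hxhalf hxpos.le (by norm_num)
      calc x^2 = x*x := sq x
        _ ≤ 1/2 * (1/2) := h
        _ = 1/4 := by norm_num
    have hx3 : x^3 ≤ x/4 := by
      have h := mul_le_mul_of_nonneg_left hx2 hxpos.le
      calc x^3 = x * x^2 := by ring
        _ ≤ x * (1/4) := h
        _ = x/4 := by ring
    have hsin2 : 15/16 * x ≤ Real.sin x := by linarith
    have hKε2 : 1 ≤ 2*(k:ℝ)*ε := by linarith [hkey, hεpos.le]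
    rw [div_le_iff₀ (by positivity : (0:ℝ) < 6 * Real.sqrt ε)]
    have h19 : (k:ℝ) * (2 * r * Real.sin x) * (6 * Real.sqrt ε)
        ≤ gweight (coreGadget k) (gadgetW r ε) * (6 * Real.sqrt ε) :=
      mul_le_mul_of_nonneg_right hge (by positivity)
    have h20 : (k:ℝ) * (2 * r * (15/16 * x)) * (6 * Real.sqrt ε)
        ≤ (k:ℝ) * (2 * r * Real.sin x) * (6 * Real.sqrt ε) := by
      apply mul_le_mul_of_nonneg_right _ (by positivity)
      exact mul_le_mul_of_nonneg_left
        (mul_le_mul_of_nonneg_left hsin2 (by linarith)) (by linarith)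
    have hhalf : (1/2:ℝ) ≤ (k:ℝ)*ε := by linarith
    have h22 : 1/4 ≤ ((k:ℝ)*ε)^2 := by
      calc (1/4:ℝ) = (1/2)^2 := by norm_num
        _ ≤ ((k:ℝ)*ε)^2 := pow_le_pow_left₀ (by norm_num) hhalf 2
    have key : (k:ℝ) * (2 * r * (15/16 * ((k:ℝ) * ε * Real.sqrt ε / 2))) * (6 * Real.sqrt ε)
        = 45/8 * r * ((k:ℝ)*ε)^2 := by
      linear_combination (45/8 * r * (k:ℝ)^2 * ε) * hss
    have h21 : r ≤ (k:ℝ) * (2 * r * (15/16 * x)) * (6 * Real.sqrt ε) := by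
      rw [hx_eq, key]
      have h23 := mul_le_mul_of_nonneg_left h22 hr.le
      linarith [h23, hr]
    linarith

end LightSpanners
end

section
/- If a finite metric space (X,d_X) is (t,η)-decomposable, then it admits a general sparse spanner oracle of stretch O(t) with weak sparsity O(t·log|X| / η). Concretely, for each subset T ⊆ X and each L > 0, taking O(1/η · log|T|) independent samples from a (t,2L,η)-decomposition and, in each sampled partition, connecting all points of T in a common cluster by a star, yields (with constant success probability) a graph S with at most O((|T|·log|T|)/η) edges, each of weight at most 4tL, in which every pair x ≠ y ∈ T with L ≤ d_X(x,y) < 2L satisfies d_S(x,y) ≤ O(t)·d_X(x,y). -/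
open scoped ENNReal
open scoped Classical

namespace LightSpanners

/-- Metric weights on the pairs of points of a metric space. -/
noncomputable def metricW {X : Type*} [PseudoMetricSpace X] : Sym2 X → ℝ :=
  Sym2.lift ⟨fun a b => dist a b, fun a b => dist_comm a b⟩

/-- `D` is a `(t,Δ,η)`-decomposition of the metric space `X`:  a distribution over
partitions of `X` (encoded as equivalence relations) such that every partition in the
support is `t·Δ`-bounded, and every two points at distance at most `Δ` lie in a common
cluster with probability at least `η`. -/
def IsDecomposition {X : Type*} [MetricSpace X] (t Δ η : ℝ)
    (D : PMF (Setoid X)) : Prop :=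
  (∀ P ∈ D.support, ∀ x y : X, P.r x y → dist x y ≤ t * Δ) ∧
  (∀ x y : X, x ≠ y → dist x y ≤ Δ →
    ENNReal.ofReal η ≤ D.toOuterMeasure {P : Setoid X | P.r x y})


lemma exists_good_partition{X : Type} (D : PMF (Setoid X)) {η : ℝ} (hη : 0 < η)
    (Q : Finset (X × X)) (hQne : Q.Nonempty)
    (hcov : ∀ q ∈ Q, ENNReal.ofReal η ≤ D.toOuterMeasure {P : Setoid X | P.r q.1 q.2}) :
    ∃ P ∈ D.support, η * Q.card ≤ ((Q.filter (fun q => P.r q.1 q.2)).card : ℝ) := by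
  by_contra hcon
  push_neg at hcon
  have hQpos : (0:ℝ) < η * Q.card := by
    have := hQne.card_pos
    have : (0:ℝ) < Q.card := by exact_mod_cast this
    positivity
  set m : ℕ := ⌈η * Q.card⌉₊ - 1 with hm
  have hceil : 1 ≤ ⌈η * (Q.card:ℝ)⌉₊ := Nat.one_le_ceil_iff.mpr hQpos
  have hmlt : (m:ℝ) < η * Q.card := by
    have h1 := Nat.ceil_lt_add_one hQpos.le
    have h2 : ((m:ℕ):ℝ) = (⌈η * (Q.card:ℝ)⌉₊:ℝ) - 1 := by
      rw [hm, Nat.cast_sub hceil]; norm_num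
    linarith
  have hfilter_le : ∀ P : Setoid X, D P ≠ 0 → (Q.filter (fun q => P.r q.1 q.2)).card ≤ m := by
    intro P hP
    have h1 := hcon P (by rwa [PMF.mem_support_iff])
    have h2 : (Q.filter (fun q => P.r q.1 q.2)).card < ⌈η * (Q.card:ℝ)⌉₊ := Nat.lt_ceil.mpr h1
    omega
  have key : ENNReal.ofReal (η * Q.card) ≤
      ∑' P : Setoid X, D P * ((Q.filter (fun q => P.r q.1 q.2)).card : ℝ≥0∞) := by
    calc ENNReal.ofReal (η * Q.card)
        = Q.card • ENNReal.ofReal η := by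
          rw [ENNReal.ofReal_mul hη.le, ENNReal.ofReal_natCast, nsmul_eq_mul, mul_comm]
      _ ≤ ∑ q ∈ Q, D.toOuterMeasure {P : Setoid X | P.r q.1 q.2} :=
          Finset.card_nsmul_le_sum _ _ _ hcov
      _ = ∑ q ∈ Q, ∑' P : Setoid X, {P' : Setoid X | P'.r q.1 q.2}.indicator (⇑D) P := by
          simp [PMF.toOuterMeasure_apply]
      _ = ∑' P : Setoid X, ∑ q ∈ Q, {P' : Setoid X | P'.r q.1 q.2}.indicator (⇑D) P :=
          (Summable.tsum_finsetSum (fun _ _ => ENNReal.summable)).symm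
      _ = ∑' P : Setoid X, D P * ((Q.filter (fun q => P.r q.1 q.2)).card : ℝ≥0∞) := by
          refine tsum_congr (fun P => ?_)
          simp only [Set.indicator_apply, Set.mem_setOf_eq]
          rw [← Finset.sum_filter, Finset.sum_const, nsmul_eq_mul, mul_comm]
  have upper : (∑' P : Setoid X, D P * ((Q.filter (fun q => P.r q.1 q.2)).card : ℝ≥0∞))
      ≤ (m : ℝ≥0∞) := by
    calc ∑' P : Setoid X, D P * ((Q.filter (fun q => P.r q.1 q.2)).card : ℝ≥0∞)
        ≤ ∑' P : Setoid X, D P * (m : ℝ≥0∞) := by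
          refine ENNReal.tsum_le_tsum (fun P => ?_)
          by_cases h : D P = 0
          · simp [h]
          · exact mul_le_mul_right (by exact_mod_cast Nat.cast_le.mpr (hfilter_le P h)) _
      _ = (∑' P : Setoid X, D P) * (m : ℝ≥0∞) := ENNReal.tsum_mul_right
      _ = (m : ℝ≥0∞) := by rw [PMF.tsum_coe, one_mul]
  have : ENNReal.ofReal (η * Q.card) ≤ (m : ℝ≥0∞) := key.trans upper
  rw [← ENNReal.ofReal_natCast, ENNReal.ofReal_le_ofReal_iff (Nat.cast_nonneg m)] at this
  linarith

lemma log_natCast_nonneg (n : ℕ) : 0 ≤ Real.log n := by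
  rcases Nat.eq_zero_or_pos n with h | h
  · simp [h]
  · exact Real.log_nonneg (by exact_mod_cast h)

lemma exists_cover_list{X : Type} (D : PMF (Setoid X)) {η : ℝ} (hη : 0 < η)
    (Q : Finset (X × X))
    (hcov : ∀ q ∈ Q, ENNReal.ofReal η ≤ D.toOuterMeasure {P : Setoid X | P.r q.1 q.2}) :
    ∃ l : List (Setoid X), (∀ P ∈ l, P ∈ D.support) ∧
      (∀ q ∈ Q, ∃ P ∈ l, P.r q.1 q.2) ∧
      (l.length : ℝ) * η ≤ η + Real.log Q.card := by
  induction Q using Finset.strongInduction with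
  | _ Q ih =>
  rcases Q.eq_empty_or_nonempty with rfl | hQne
  · exact ⟨[], by simp, by simp, by simp [hη.le]⟩
  obtain ⟨P, hPsupp, hPcount⟩ := exists_good_partition D hη Q hQne hcov
  have hQpos : (0:ℝ) < Q.card := by exact_mod_cast hQne.card_pos
  set Q' := Q.filter (fun q => ¬ P.r q.1 q.2) with hQ'def
  have hQ'ss : Q' ⊂ Q := by
    rw [hQ'def, Finset.filter_ssubset]
    have hpos : 0 < (Q.filter (fun q => P.r q.1 q.2)).card := by
      rcases Nat.eq_zero_or_pos (Q.filter (fun q => P.r q.1 q.2)).card with h | h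
      · rw [h] at hPcount; push_cast at hPcount; nlinarith
      · exact h
    obtain ⟨q, hq⟩ := Finset.card_pos.mp hpos
    exact ⟨q, Finset.mem_of_mem_filter q hq, not_not.mpr (Finset.mem_filter.mp hq).2⟩
  rcases Q'.eq_empty_or_nonempty with hQ'e | hQ'ne
  · refine ⟨[P], by simpa using hPsupp, ?_, ?_⟩
    · intro q hq
      refine ⟨P, by simp, ?_⟩
      by_contra h
      have : q ∈ Q' := by rw [hQ'def]; exact Finset.mem_filter.mpr ⟨hq, h⟩
      simp [hQ'e] at this
    · have := log_natCast_nonneg Q.card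
      simp only [List.length_cons, List.length_nil]
      push_cast
      linarith
  · obtain ⟨l', hl'supp, hl'cov, hl'len⟩ :=
      ih Q' hQ'ss (fun q hq => hcov q (Finset.mem_of_mem_filter q hq))
    refine ⟨P :: l', ?_, ?_, ?_⟩
    · intro P' hP'
      rcases List.mem_cons.mp hP' with rfl | h
      · exact hPsupp
      · exact hl'supp P' h
    · intro q hq
      by_cases h : P.r q.1 q.2
      · exact ⟨P, List.mem_cons_self, h⟩
      · obtain ⟨P', hP', h'⟩ := hl'cov q (by rw [hQ'def]; exact Finset.mem_filter.mpr ⟨hq, h⟩)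
        exact ⟨P', List.mem_cons_of_mem _ hP', h'⟩
    · -- length bound
      have hsplit : (Q.filter (fun q => P.r q.1 q.2)).card + Q'.card = Q.card := by
        rw [hQ'def]; exact Finset.card_filter_add_card_filter_not _
      have hcard' : (Q'.card : ℝ) ≤ (1 - η) * Q.card := by
        have : ((Q.filter (fun q => P.r q.1 q.2)).card : ℝ) + (Q'.card:ℝ) = Q.card := by
          exact_mod_cast hsplit
        nlinarith
      have h1 : (1:ℝ) ≤ (Q'.card:ℝ) := by exact_mod_cast hQ'ne.card_pos
      have hη1 : 0 < 1 - η := by nlinarith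
      have hlog : Real.log Q'.card ≤ Real.log (1-η) + Real.log Q.card := by
        calc Real.log Q'.card ≤ Real.log ((1-η) * Q.card) :=
              Real.log_le_log (by linarith) hcard'
          _ = Real.log (1-η) + Real.log Q.card := Real.log_mul (ne_of_gt hη1) (ne_of_gt hQpos)
      have hln : Real.log (1-η) ≤ -η := by
        have := Real.log_le_sub_one_of_pos hη1; linarith
      simp only [List.length_cons]
      push_cast
      nlinarith [hl'len]

lemma metricW_mk {X : Type*} [PseudoMetricSpace X] (a b : X) : metricW s(a,b) = dist a b := rfl

lemma walkWeight_cons {V : Type*} {G : SimpleGraph V} (w : Sym2 V → ℝ) {u v x : V}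
    (h : G.Adj u v) (p : G.Walk v x) :
    walkWeight w (SimpleGraph.Walk.cons h p) = w s(u,v) + walkWeight w p := by
  simp [walkWeight]

lemma walkWeight_nil {V : Type*} {G : SimpleGraph V} (w : Sym2 V → ℝ) {u : V} :
    walkWeight w (SimpleGraph.Walk.nil : G.Walk u u) = 0 := by
  simp [walkWeight]

set_option maxHeartbeats 2000000 in
/-- If a finite metric space (X,d_X) is (t,η)-decomposable, then it
admits a general sparse spanner oracle of stretch O(t) with weak sparsity
O(t·log|X|/η).  Concretely, for each subset T ⊆ X and each L > 0, sampling O(log|T|/η)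
partitions from a (t,2L,η)-decomposition and connecting, in each sampled partition, all
points of T lying in a common cluster by a star yields (with constant success
probability) a graph S with at most O((|T|·log|T|)/η) edges, each of weight at most 4tL,
in which every pair x ≠ y ∈ T with L ≤ d_X(x,y) < 2L satisfies
d_S(x,y) ≤ O(t)·d_X(x,y). -/
theorem decomposable_gsso :
    ∃ c : ℝ, 0 < c ∧
      ∀ (X : Type) [MetricSpace X] [Fintype X],
      ∀ t η : ℝ, 1 ≤ t → 0 < η → η ≤ 1 →
        (∀ Δ : ℝ, 0 < Δ → ∃ D : PMF (Setoid X), IsDecomposition t Δ η D) →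
      ∀ (T : Set X) (L : ℝ), 0 < L →
        ∃ S : SimpleGraph X,
          ((S.edgeSet.ncard : ℝ) ≤ c * (T.ncard : ℝ) * Real.log (T.ncard) / η) ∧
          (∀ e ∈ S.edgeSet, metricW e ≤ 4 * t * L) ∧
          (∀ x ∈ T, ∀ y ∈ T, x ≠ y → L ≤ dist x y → dist x y < 2 * L →
            wdist S metricW x y ≤ ENNReal.ofReal (c * t * dist x y)) ∧
          gweight S metricW ≤
            c * t * Real.log (Fintype.card X) / η * (T.ncard : ℝ) * L := by
  refine ⟨100, by norm_num, ?_⟩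
  intro X _ _ t η ht hη hη1 hdec T L hL
  classical
  obtain ⟨D, hD1, hD2⟩ := hdec (2*L) (by linarith)
  have hlogT0 : 0 ≤ Real.log (T.ncard : ℕ) := log_natCast_nonneg _
  have hlogX0 : 0 ≤ Real.log (Fintype.card X : ℕ) := log_natCast_nonneg _
  set Tf := T.toFinset with hTfdef
  have hTn : T.ncard = Tf.card := Set.ncard_eq_toFinset_card' T
  set Q₀ : Finset (X × X) := (Tf ×ˢ Tf).filter
      (fun q => q.1 ≠ q.2 ∧ L ≤ dist q.1 q.2 ∧ dist q.1 q.2 < 2*L) with hQ₀def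
  have hmemQ₀ : ∀ x y : X, x ∈ T → y ∈ T → x ≠ y → L ≤ dist x y → dist x y < 2*L →
      (x,y) ∈ Q₀ := by
    intro x y hx hy hne h1 h2
    rw [hQ₀def, Finset.mem_filter, Finset.mem_product]
    exact ⟨⟨Set.mem_toFinset.mpr hx, Set.mem_toFinset.mpr hy⟩, hne, h1, h2⟩
  rcases Q₀.eq_empty_or_nonempty with hQe | hQne
  · -- trivial case: no pair to serve
    refine ⟨⊥, ?_, ?_, ?_, ?_⟩
    · simp only [SimpleGraph.edgeSet_bot, Set.ncard_empty, Nat.cast_zero]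
      have h0 : (0:ℝ) ≤ 100 * (T.ncard:ℝ) * Real.log (T.ncard) := by positivity
      positivity
    · intro e he
      rw [SimpleGraph.edgeSet_bot] at he
      exact absurd he (Set.notMem_empty e)
    · intro x hx y hy hne h1 h2
      exact absurd (hmemQ₀ x y hx hy hne h1 h2) (by simp [hQe])
    · have : gweight (⊥ : SimpleGraph X) metricW = 0 := by
        unfold gweight
        rw [SimpleGraph.edgeSet_bot, finsum_mem_empty]
      rw [this]
      have h0 : (0:ℝ) ≤ 100 * t * Real.log (Fintype.card X) := by positivity
      positivity
  · -- main case
    have hQ₀cov : ∀ q ∈ Q₀, ENNReal.ofReal η ≤ D.toOuterMeasure {P : Setoid X | P.r q.1 q.2} := by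
      intro q hq
      rw [hQ₀def, Finset.mem_filter] at hq
      exact hD2 q.1 q.2 hq.2.1 (by linarith [hq.2.2.2])
    obtain ⟨l, hlsupp, hlcov, hllen⟩ := exists_cover_list D hη Q₀ hQ₀cov
    set rep : Setoid X → X → X := fun P x => (Quotient.mk P x).out with hrepdef
    have rep_rel : ∀ (P : Setoid X) (x : X), P.r x (rep P x) :=
      fun P x => Quotient.exact ((Quotient.out_eq _).symm)
    have rep_congr : ∀ (P : Setoid X) (x y : X), P.r x y → rep P x = rep P y := by
      intro P x y h
      simp only [hrepdef]
      rw [Quotient.sound h]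
    set Ef : Finset (Sym2 X) := (l.toFinset ×ˢ Tf).image (fun p => s(p.2, rep p.1 p.2))
      with hEfdef
    set S : SimpleGraph X := SimpleGraph.fromEdgeSet ↑Ef with hSdef
    have hedge_sub : S.edgeSet ⊆ ↑Ef := by
      rw [hSdef, SimpleGraph.edgeSet_fromEdgeSet]; exact Set.diff_subset
    have hedge_mem : ∀ e ∈ S.edgeSet, ∃ P ∈ l, ∃ x ∈ T, e = s(x, rep P x) := by
      intro e he
      have hm := hedge_sub he
      rw [hEfdef] at hm
      simp only [Finset.coe_image, Set.mem_image, Finset.mem_coe, Finset.mem_product] at hm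
      obtain ⟨⟨P, x⟩, ⟨hP, hx⟩, rfl⟩ := hm
      exact ⟨P, List.mem_toFinset.mp hP, x, Set.mem_toFinset.mp hx, rfl⟩
    have hweight : ∀ e ∈ S.edgeSet, metricW e ≤ 2 * t * L := by
      intro e he
      obtain ⟨P, hP, x, hx, rfl⟩ := hedge_mem e he
      have hm : metricW s(x, rep P x) = dist x (rep P x) := rfl
      rw [hm]
      have := hD1 P (hlsupp P hP) x (rep P x) (rep_rel P x)
      linarith
    have htL : (0:ℝ) ≤ 2*t*L := by nlinarith
    have hencard : S.edgeSet.ncard ≤ l.length * Tf.card := by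
      have h1 : S.edgeSet.ncard ≤ ((Ef : Set (Sym2 X))).ncard :=
        Set.ncard_le_ncard hedge_sub (Finset.finite_toSet Ef)
      rw [Set.ncard_coe_finset] at h1
      refine h1.trans (Finset.card_image_le.trans ?_)
      rw [Finset.card_product]
      exact Nat.mul_le_mul_right _ l.toFinset_card_le
    -- numeric facts
    obtain ⟨q0, hq0⟩ := hQne
    have hT2 : 2 ≤ Tf.card := by
      rw [hQ₀def, Finset.mem_filter, Finset.mem_product] at hq0
      exact Finset.one_lt_card.mpr ⟨q0.1, hq0.1.1, q0.2, hq0.1.2, hq0.2.1⟩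
    have hn2 : (2:ℝ) ≤ (Tf.card:ℝ) := by exact_mod_cast hT2
    have hlogn : (1:ℝ) ≤ 2 * Real.log Tf.card := by
      have h2 := Real.log_two_gt_d9
      have : Real.log 2 ≤ Real.log Tf.card := Real.log_le_log (by norm_num) hn2
      linarith
    have hlogn0 : 0 ≤ Real.log (Tf.card:ℕ) := log_natCast_nonneg _
    have hQcard : (Q₀.card : ℝ) ≤ (Tf.card:ℝ)^2 := by
      have h : Q₀.card ≤ Tf.card ^ 2 := by
        calc Q₀.card ≤ (Tf ×ˢ Tf).card :=
              Finset.card_le_card (by rw [hQ₀def]; exact Finset.filter_subset _ _)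
          _ = Tf.card * Tf.card := Finset.card_product _ _
          _ = Tf.card ^ 2 := (sq Tf.card).symm
      exact_mod_cast h
    have hQ1 : (1:ℝ) ≤ (Q₀.card:ℝ) := by exact_mod_cast Finset.card_pos.mpr ⟨q0, hq0⟩
    have hlogQ : Real.log Q₀.card ≤ 2 * Real.log Tf.card := by
      calc Real.log Q₀.card ≤ Real.log ((Tf.card:ℝ)^2) := Real.log_le_log (by linarith) hQcard
        _ = 2 * Real.log Tf.card := by rw [Real.log_pow]; norm_num
    have hk4 : (l.length:ℝ) * η ≤ 4 * Real.log Tf.card := by nlinarith [hllen, hlogQ]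
    refine ⟨S, ?_, ?_, ?_, ?_⟩
    · -- edge count
      rw [hTn, le_div_iff₀ hη]
      have hen : (S.edgeSet.ncard : ℝ) ≤ (l.length:ℝ) * Tf.card := by exact_mod_cast hencard
      have hstep : (S.edgeSet.ncard : ℝ) * η ≤ ((l.length:ℝ) * η) * Tf.card := by
        have := mul_le_mul_of_nonneg_right hen hη.le
        nlinarith
      have hstep2 : ((l.length:ℝ) * η) * Tf.card ≤ (4 * Real.log Tf.card) * Tf.card :=
        mul_le_mul_of_nonneg_right hk4 (Nat.cast_nonneg _)
      nlinarith [mul_nonneg hlogn0 (Nat.cast_nonneg (α := ℝ) Tf.card)]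
    · -- edge weights
      intro e he
      have := hweight e he
      nlinarith
    · -- stretch
      intro x hx y hy hne h1 h2
      obtain ⟨P, hPl, hPr⟩ := hlcov (x,y) (hmemQ₀ x y hx hy hne h1 h2)
      have hPsupp := hlsupp P hPl
      have hdx : dist x (rep P x) ≤ t * (2*L) := hD1 P hPsupp x _ (rep_rel P x)
      have hdy : dist y (rep P y) ≤ t * (2*L) := hD1 P hPsupp y _ (rep_rel P y)
      have hrr : rep P x = rep P y := rep_congr P x y hPr
      have hmemx : s(x, rep P x) ∈ (Ef : Set (Sym2 X)) := by
        rw [hEfdef]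
        simp only [Finset.coe_image, Set.mem_image, Finset.mem_coe, Finset.mem_product]
        exact ⟨(P, x), ⟨List.mem_toFinset.mpr hPl, Set.mem_toFinset.mpr hx⟩, rfl⟩
      have hmemy : s(y, rep P y) ∈ (Ef : Set (Sym2 X)) := by
        rw [hEfdef]
        simp only [Finset.coe_image, Set.mem_image, Finset.mem_coe, Finset.mem_product]
        exact ⟨(P, y), ⟨List.mem_toFinset.mpr hPl, Set.mem_toFinset.mpr hy⟩, rfl⟩
      have hdpos := dist_nonneg (x := x) (y := y)
      by_cases hcx : rep P x = x
      · -- the representative is x itself: direct edge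
        have hmem : s(x, y) ∈ (Ef : Set (Sym2 X)) := by
          have : s(y, rep P y) = s(x, y) := by rw [← hrr, hcx, Sym2.eq_swap]
          rwa [this] at hmemy
        have hadj : S.Adj x y := by
          rw [hSdef, SimpleGraph.fromEdgeSet_adj]; exact ⟨hmem, hne⟩
        have hle : wdist S metricW x y ≤ ENNReal.ofReal (walkWeight metricW
            (SimpleGraph.Walk.cons hadj SimpleGraph.Walk.nil)) := by
          unfold wdist; exact iInf_le _ _
        refine hle.trans (ENNReal.ofReal_le_ofReal ?_)
        rw [walkWeight_cons, walkWeight_nil, metricW_mk, add_zero]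
        nlinarith
      · by_cases hcy : rep P y = y
        · have hmem : s(x, rep P x) = s(x, y) := by rw [hrr, hcy]
          have hadj : S.Adj x y := by
            rw [hSdef, SimpleGraph.fromEdgeSet_adj]
            exact ⟨by rwa [hmem] at hmemx, hne⟩
          have hle : wdist S metricW x y ≤ ENNReal.ofReal (walkWeight metricW
              (SimpleGraph.Walk.cons hadj SimpleGraph.Walk.nil)) := by
            unfold wdist; exact iInf_le _ _
          refine hle.trans (ENNReal.ofReal_le_ofReal ?_)
          rw [walkWeight_cons, walkWeight_nil, metricW_mk, add_zero]
          nlinarith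
        · -- two-edge path through the representative
          have hadj1 : S.Adj x (rep P x) := by
            rw [hSdef, SimpleGraph.fromEdgeSet_adj]
            exact ⟨hmemx, fun h => hcx h.symm⟩
          have hadj2 : S.Adj (rep P x) y := by
            rw [hSdef, SimpleGraph.fromEdgeSet_adj]
            constructor
            · rw [hrr, Sym2.eq_swap]; exact hmemy
            · rw [hrr]; exact hcy
          have hle : wdist S metricW x y ≤ ENNReal.ofReal (walkWeight metricW
              (SimpleGraph.Walk.cons hadj1 (SimpleGraph.Walk.cons hadj2 SimpleGraph.Walk.nil))) := by
            unfold wdist; exact iInf_le _ _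
          refine hle.trans (ENNReal.ofReal_le_ofReal ?_)
          rw [walkWeight_cons, walkWeight_cons, walkWeight_nil, metricW_mk, metricW_mk, add_zero]
          have heq : dist (rep P x) y = dist y (rep P y) := by rw [hrr, dist_comm]
          rw [heq]
          nlinarith
    · -- total weight
      have hfin : S.edgeSet.Finite := Set.Finite.subset (Finset.finite_toSet Ef) hedge_sub
      have hgw : gweight S metricW ≤ (S.edgeSet.ncard : ℝ) * (2 * t * L) := by
        have heq : gweight S metricW = ∑ e ∈ hfin.toFinset, metricW e := by
          unfold gweight
          exact finsum_mem_eq_finite_toFinset_sum metricW hfin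
        rw [heq, Set.ncard_eq_toFinset_card S.edgeSet hfin]
        have := Finset.sum_le_card_nsmul hfin.toFinset metricW (2*t*L)
          (fun e he => hweight e (by rwa [Set.Finite.mem_toFinset] at he))
        rwa [nsmul_eq_mul] at this
      have hnN : ((Tf.card:ℕ):ℝ) ≤ ((Fintype.card X : ℕ):ℝ) := by
        exact_mod_cast Finset.card_le_univ Tf
      have hlogN : Real.log Tf.card ≤ Real.log (Fintype.card X) :=
        Real.log_le_log (by linarith) hnN
      rw [hTn, div_mul_eq_mul_div, div_mul_eq_mul_div, le_div_iff₀ hη]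
      have hen : (S.edgeSet.ncard : ℝ) ≤ (l.length:ℝ) * Tf.card := by exact_mod_cast hencard
      have c1 : gweight S metricW ≤ ((l.length:ℝ) * Tf.card) * (2*t*L) :=
        hgw.trans (mul_le_mul_of_nonneg_right hen htL)
      have c2 : gweight S metricW * η ≤ ((l.length:ℝ)*η) * ((Tf.card:ℝ)*(2*t*L)) := by
        calc gweight S metricW * η ≤ (((l.length:ℝ) * Tf.card) * (2*t*L)) * η :=
              mul_le_mul_of_nonneg_right c1 hη.le
          _ = ((l.length:ℝ)*η) * ((Tf.card:ℝ)*(2*t*L)) := by ring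
      have hn2tL : (0:ℝ) ≤ (Tf.card:ℝ)*(2*t*L) := mul_nonneg (Nat.cast_nonneg _) htL
      have c3 : ((l.length:ℝ)*η) * ((Tf.card:ℝ)*(2*t*L)) ≤
          (4*Real.log Tf.card) * ((Tf.card:ℝ)*(2*t*L)) :=
        mul_le_mul_of_nonneg_right hk4 hn2tL
      have c4 : (4*Real.log Tf.card) * ((Tf.card:ℝ)*(2*t*L)) ≤
          (4*Real.log (Fintype.card X)) * ((Tf.card:ℝ)*(2*t*L)) :=
        mul_le_mul_of_nonneg_right (by linarith) hn2tL
      have c5 : (4*Real.log (Fintype.card X)) * ((Tf.card:ℝ)*(2*t*L)) ≤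
          100 * t * Real.log (Fintype.card X) * (Tf.card:ℝ) * L := by
        have hnn : (0:ℝ) ≤ t * Real.log (Fintype.card X) * (Tf.card:ℝ) * L :=
          mul_nonneg (mul_nonneg (mul_nonneg (by linarith) hlogX0) (Nat.cast_nonneg _)) hL.le
        nlinarith
      linarith

end LightSpanners
end
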